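/- Let ν, ν̃, ν̄ be probability measures on a common measurable space. Then for every α ∈ [0,1], |T(ν, ν̃)(α) − T(ν, ν̄)(α)| ≤ TV(ν̃, ν̄). -/

import Mathlib

open MeasureTheory Matrix Filter Topology ProbabilityTheory
open scoped ENNReal NNReal

noncomputable section

/-- Entrywise (Borel) measurable space on real matrices. -/
instance matrixMeasurableSpace {m n : Type*} : MeasurableSpace (Matrix m n ℝ) :=
  MeasurableSpace.pi

/-- The Stiefel manifold `O(p,k)` of `p × k` real matrices with orthonormal columns. -/
def Stiefel (p k : ℕ) : Type :=
  {V : Matrix (Fin p) (Fin k) ℝ // Vᵀ * V = 1}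

instance {p k : ℕ} : MeasurableSpace (Stiefel p k) :=
  inferInstanceAs (MeasurableSpace {V : Matrix (Fin p) (Fin k) ℝ // Vᵀ * V = 1})

/-- Left rotation of a Stiefel point by an orthogonal matrix. -/
def stiefelRot {p k : ℕ} {A : Matrix (Fin p) (Fin p) ℝ} (hA : Aᵀ * A = 1)
    (V : Stiefel p k) : Stiefel p k :=
  ⟨A * V.1, by
    rw [Matrix.transpose_mul, Matrix.mul_assoc, ← Matrix.mul_assoc Aᵀ A V.1, hA,
      Matrix.one_mul]
    exact V.2⟩

/-- `ξ` is the uniform (Haar) distribution on `O(p,k)`: it is characterized (uniquely) as a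
rotation-invariant Borel probability measure on the Stiefel manifold. -/
def IsUniformStiefel (p k : ℕ) (ξ : Measure (Stiefel p k)) : Prop :=
  IsProbabilityMeasure ξ ∧
    ∀ (A : Matrix (Fin p) (Fin p) ℝ) (hA : Aᵀ * A = 1),
      Measure.map (stiefelRot hA) ξ = ξ

/-- Normalizing constant of the Gibbs distribution. -/
def gibbsZ {p k : ℕ} (ξ : Measure (Stiefel p k)) (S : Matrix (Fin p) (Fin p) ℝ)
    (β : ℝ) : ℝ :=
  ∫ V : Stiefel p k, Real.exp ((p : ℝ) * β / 2 * ((V.1)ᵀ * S * V.1).trace) ∂ξ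

/-- The Gibbs distribution `ν(· | S, β, k)` relative to the uniform distribution `ξ` on
`O(p,k)`. -/
def gibbs {p k : ℕ} (ξ : Measure (Stiefel p k)) (S : Matrix (Fin p) (Fin p) ℝ)
    (β : ℝ) : Measure (Stiefel p k) :=
  ξ.withDensity fun V =>
    ENNReal.ofReal
      (Real.exp ((p : ℝ) * β / 2 * ((V.1)ᵀ * S * V.1).trace) / gibbsZ ξ S β)

/-- `eigAt l j p` is the (0-based) `j`-th entry of the decreasing eigenvalue list `l p`
(junk value `0` when `j ≥ p`). -/
def eigAt (l : ∀ p, Fin p → ℝ) (j p : ℕ) : ℝ :=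
  if h : j < p then l p ⟨j, h⟩ else 0

/-- `eig1 l j` : 0-based `j`-th entry of a single eigenvalue list. -/
def eig1 {p : ℕ} (l : Fin p → ℝ) (j : ℕ) : ℝ :=
  if h : j < p then l ⟨j, h⟩ else 0

/-- Indices of the top `k` eigenvalues. -/
def topIdx (p k : ℕ) : Finset (Fin p) := Finset.univ.filter fun i => (i : ℕ) < k

/-- Indices of the smallest `p - k` eigenvalues. -/
def bulkIdx (p k : ℕ) : Finset (Fin p) := Finset.univ.filter fun i => k ≤ (i : ℕ)

/-- Hilbert transform `H_μ(x) = ∫ dμ(t) / (x - t)`. -/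
def hilbert (μ : Measure ℝ) (x : ℝ) : ℝ := ∫ t, (x - t)⁻¹ ∂μ

/-- Derivative of the Hilbert transform, `H'_μ(x) = -∫ dμ(t) / (x - t)²`. -/
def hilbertDeriv (μ : Measure ℝ) (x : ℝ) : ℝ := -∫ t, ((x - t) ^ 2)⁻¹ ∂μ

/-- Assumption (MAT) on a sequence of symmetric matrices `S p`, presented together with (any)
orthogonal eigendecomposition `S p = U p * diagonal (l p) * (U p)ᵀ` with decreasing
eigenvalues `l p`.  The limits are `γ 1 ≥ ⋯ ≥ γ k > γ (k+1) > 0` (1-based indexing) and the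
limiting spectral measure is `μ`, a probability measure with compact support contained in
`(-∞, γ (k+1)]`. -/
def AssumptionMAT (k : ℕ) (γ : ℕ → ℝ) (μ : Measure ℝ)
    (S : ∀ p, Matrix (Fin p) (Fin p) ℝ) (l : ∀ p, Fin p → ℝ)
    (U : ∀ p, Matrix (Fin p) (Fin p) ℝ) : Prop :=
  0 < k ∧
  (∀ p, (U p)ᵀ * U p = 1) ∧
  (∀ p, S p = U p * Matrix.diagonal (l p) * (U p)ᵀ) ∧
  (∀ p, Antitone (l p)) ∧
  (∀ i j : ℕ, 1 ≤ i → i ≤ j → j ≤ k + 1 → γ j ≤ γ i) ∧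
  γ (k + 1) < γ k ∧ 0 < γ (k + 1) ∧
  IsProbabilityMeasure μ ∧
  (∃ a : ℝ, μ (Set.Icc a (γ (k + 1)))ᶜ = 0) ∧
  (∀ i : ℕ, 1 ≤ i → i ≤ k + 1 →
    Tendsto (fun p : ℕ => eigAt l (i - 1) p) atTop (nhds (γ i))) ∧
  (∀ f : BoundedContinuousFunction ℝ ℝ,
    Tendsto (fun p : ℕ => ((p : ℝ) - (k : ℝ))⁻¹ * ∑ i ∈ bulkIdx p k, f (l p i))
      atTop (nhds (∫ t, f t ∂μ)))

/-- Frobenius norm. -/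
def frob {m n : Type*} [Fintype m] [Fintype n] (A : Matrix m n ℝ) : ℝ :=
  Real.sqrt (∑ i, ∑ j, A i j ^ 2)

/-- `ℓ² → ℓ²` operator norm. -/
def opNorm {m n : Type*} [Fintype m] [Fintype n] (A : Matrix m n ℝ) : ℝ :=
  sSup {r : ℝ | ∃ x : n → ℝ, (∑ j, x j ^ 2) ≤ 1 ∧ r = Real.sqrt (∑ i, (A.mulVec x i) ^ 2)}

/-- The `p × k` matrix formed by the first `k` columns of `U` (junk `0` when `p < k`). -/
def firstCols (p k : ℕ) (U : Matrix (Fin p) (Fin p) ℝ) : Matrix (Fin p) (Fin k) ℝ :=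
  Matrix.of fun r j => if h : (j : ℕ) < p then U r ⟨j, h⟩ else 0

/-- The `p × (p-k)` matrix formed by the last `p - k` columns of `U`. -/
def lastCols (p k : ℕ) (U : Matrix (Fin p) (Fin p) ℝ) : Matrix (Fin p) (Fin (p - k)) ℝ :=
  Matrix.of fun r c => U r ⟨k + (c : ℕ), by have := c.isLt; omega⟩

/-- Total variation distance `sup_A |μ(A) - ν(A)|`. -/
def tvDist {Ω : Type*} [MeasurableSpace Ω] (μ ν : Measure Ω) : ℝ :=
  sSup {r : ℝ | ∃ A : Set Ω, MeasurableSet A ∧ r = |(μ A).toReal - (ν A).toReal|}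

/-- Trade-off function `T(ν₀, ν₁)(α)`. -/
def tradeoff {Ω : Type*} [MeasurableSpace Ω] (ν₀ ν₁ : Measure Ω) (α : ℝ) : ℝ :=
  sInf {r : ℝ | ∃ φ : Ω → ℝ, Measurable φ ∧ (∀ x, φ x ∈ Set.Icc (0 : ℝ) 1) ∧
    (∫ x, φ x ∂ν₀) ≤ α ∧ r = 1 - ∫ x, φ x ∂ν₁}

open Classical in
/-- Rényi divergence of order `a` of `ν₁` with respect to `ν₀` (with value `⊤` when
`ν₁` is not absolutely continuous w.r.t. `ν₀`). -/
def renyiDiv {Ω : Type*} [MeasurableSpace Ω] (a : ℝ) (ν₁ ν₀ : Measure Ω) : EReal :=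
  if ν₁ ≪ ν₀ then
    (((a - 1)⁻¹ * Real.log (∫ x, ((ν₁.rnDeriv ν₀ x).toReal) ^ a ∂ν₀) : ℝ) : EReal)
  else ⊤

/-- Sample covariance of a dataset. -/
def sampleCov (p : ℕ) (X : Multiset (Fin p → ℝ)) : Matrix (Fin p) (Fin p) ℝ :=
  ((Multiset.card X : ℝ))⁻¹ • (X.map fun x => vecMulVec x x).sum

/-- Assumption (DATA). -/
def AssumptionDATA (k : ℕ) (θ : ℝ) (γ : ℕ → ℝ) (μ : Measure ℝ)
    (X : ∀ p, Multiset (Fin p → ℝ)) (l : ∀ p, Fin p → ℝ)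
    (U : ∀ p, Matrix (Fin p) (Fin p) ℝ) : Prop :=
  0 < θ ∧
  (∀ p, ∀ x ∈ X p, (∑ j, x j ^ 2) ≤ (p : ℝ)) ∧
  Tendsto (fun p : ℕ => (Multiset.card (X p) : ℝ) / (p : ℝ) ^ ((3 : ℝ) / 2)) atTop
    (nhds θ) ∧
  AssumptionMAT k γ μ (fun p => sampleCov p (X p)) l U

open Classical in
/-- `Y` is a neighboring dataset of `X`: add one norm-bounded point or remove one point. -/
def IsNeighbor (p : ℕ) (X Y : Multiset (Fin p → ℝ)) : Prop :=
  (∃ x : Fin p → ℝ, (∑ j, x j ^ 2) ≤ (p : ℝ) ∧ Y = x ::ₘ X) ∨ ∃ x ∈ X, Y = X.erase x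

open Classical in
/-- Neighboring datasets without the norm constraint. -/
def IsNeighborFree (p : ℕ) (X Y : Multiset (Fin p → ℝ)) : Prop :=
  (∃ x : Fin p → ℝ, Y = x ::ₘ X) ∨ ∃ x ∈ X, Y = X.erase x

/-- The asymptotic privacy parameter `σ²_β` (with `Hk = H_μ(γ_k)`, `Hk' = H'_μ(γ_k)`). -/
def sigmaBetaSq (θ Δ Hk Hk' β : ℝ) : ℝ :=
  if Hk - Δ * Hk' ≤ β then
    1 / (2 * Δ * θ ^ 2) * ((β - Hk) ^ 2 / (2 * (β - Hk) + Δ * Hk'))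
  else -Hk' / (2 * θ ^ 2)

/-- Empirical Hilbert transform `H_Σ`. -/
def empH (p k : ℕ) (l : Fin p → ℝ) (x : ℝ) : ℝ :=
  ((p : ℝ))⁻¹ * ∑ i ∈ bulkIdx p k, (x - l i)⁻¹

/-- Empirical kernel `K_Σ`. -/
def empK (p k : ℕ) (l : Fin p → ℝ) (x y : ℝ) : ℝ :=
  ((p : ℝ))⁻¹ * ∑ i ∈ bulkIdx p k, ((x - l i) * (y - l i))⁻¹

/-- The variance function `σ²_Σ(E, β)`, expressed through the eigendecomposition
`Σ = U diag(l) Uᵀ` (decreasing `l`); `(Uᵀ E U) j m = u_jᵀ E u_m`. -/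
def varFun (p k : ℕ) (l : Fin p → ℝ) (U E : Matrix (Fin p) (Fin p) ℝ) (β : ℝ) : ℝ :=
  1 / 2 * ∑ j ∈ topIdx p k, ∑ m ∈ topIdx p k,
      empK p k l (l j) (l m) * ((Uᵀ * E * U) j m) ^ 2 +
    ∑ j ∈ topIdx p k, ∑ i ∈ bulkIdx p k,
      (β - empH p k l (l j)) / (l j - l i) * ((Uᵀ * E * U) i j) ^ 2

/-- `j`-th column of a square matrix. -/
def matCol {p : ℕ} (U : Matrix (Fin p) (Fin p) ℝ) (j : Fin p) : Fin p → ℝ := fun r => U r j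

/-- The centering matrix `M_β(Σ)`, via the eigendecomposition `Σ = U diag(l) Uᵀ`. -/
def centerM (p k : ℕ) (l : Fin p → ℝ) (U : Matrix (Fin p) (Fin p) ℝ) (β : ℝ) :
    Matrix (Fin p) (Fin p) ℝ :=
  (∑ j ∈ topIdx p k, (1 - empH p k l (l j) / β) • vecMulVec (matCol U j) (matCol U j)) +
    ((p : ℝ) * β)⁻¹ •
      ∑ j ∈ topIdx p k, ∑ i ∈ bulkIdx p k,
        (l j - l i)⁻¹ • vecMulVec (matCol U i) (matCol U i)

open Classical in
/-- Spectral functional calculus for symmetric matrices (junk value `0` otherwise). -/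
def matFun {k : ℕ} (f : ℝ → ℝ) (S : Matrix (Fin k) (Fin k) ℝ) :
    Matrix (Fin k) (Fin k) ℝ :=
  if hS : S.IsHermitian then
    (hS.eigenvectorUnitary : Matrix (Fin k) (Fin k) ℝ) *
        Matrix.diagonal (fun i => f (hS.eigenvalues i)) *
      star (hS.eigenvectorUnitary : Matrix (Fin k) (Fin k) ℝ)
  else 0

/-- Vertical stacking of a `k × k` block on top of a `(p-k) × k` block. -/
def vstack {p k : ℕ} (A : Matrix (Fin k) (Fin k) ℝ)
    (B : Matrix (Fin (p - k)) (Fin k) ℝ) : Matrix (Fin p) (Fin k) ℝ :=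
  Matrix.of fun r c =>
    if h : (r : ℕ) < k then A ⟨r, h⟩ c
    else B ⟨(r : ℕ) - k, by have := r.isLt; omega⟩ c

/-- The law of the Gaussian matrix `Z` with independent entries
`Z i j ∼ N(0, 1/(β p (λ_{j+1} - λ_{k+i+1})))` (paper indexing). -/
def gaussZMeasure (p k : ℕ) (l : Fin p → ℝ) (β : ℝ) :
    Measure (Matrix (Fin (p - k)) (Fin k) ℝ) :=
  Measure.pi fun _i : Fin (p - k) => Measure.pi fun _j : Fin k =>
    gaussianReal 0 (Real.toNNReal ((β * p * (eig1 l (_j : ℕ) - eig1 l (k + (_i : ℕ))))⁻¹))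

/-- Output distribution of the sampling algorithm, as a measure on `p × k` matrices. -/
def samplerLaw (p k : ℕ) (U : Matrix (Fin p) (Fin p) ℝ) (l : Fin p → ℝ) (β : ℝ)
    (κ : Measure (Stiefel k k)) : Measure (Matrix (Fin p) (Fin k) ℝ) :=
  Measure.map
    (fun QZ : Stiefel k k × Matrix (Fin (p - k)) (Fin k) ℝ =>
      U * vstack (matFun (fun t => Real.sqrt (max t 0)) (1 - (QZ.2)ᵀ * QZ.2)) QZ.2 *
        (QZ.1).1)
    (κ.prod (gaussZMeasure p k l β))

/-- `V̄⋆ = U⋆ᵀ V`. -/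
def Vbar (p k : ℕ) (U : Matrix (Fin p) (Fin p) ℝ) (V : Matrix (Fin p) (Fin k) ℝ) :
    Matrix (Fin k) (Fin k) ℝ :=
  (firstCols p k U)ᵀ * V

/-- `Q(V) = ((V̄⋆ V̄⋆ᵀ)^{1/2})⁻¹ V̄⋆` (Mathlib's matrix inverse is `0` on singular input). -/
def Qfun (p k : ℕ) (U : Matrix (Fin p) (Fin p) ℝ) (V : Matrix (Fin p) (Fin k) ℝ) :
    Matrix (Fin k) (Fin k) ℝ :=
  (matFun Real.sqrt (Vbar p k U V * (Vbar p k U V)ᵀ))⁻¹ * Vbar p k U V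

/-- `Z(V) = V̄⊥ Q(V)ᵀ`. -/
def Zfun (p k : ℕ) (U : Matrix (Fin p) (Fin p) ℝ) (V : Matrix (Fin p) (Fin k) ℝ) :
    Matrix (Fin (p - k)) (Fin k) ℝ :=
  (lastCols p k U)ᵀ * V * (Qfun p k U V)ᵀ

/-- Lebesgue measure on real matrices. -/
def matVolume (m n : ℕ) : Measure (Matrix (Fin m) (Fin n) ℝ) :=
  Measure.pi fun _ : Fin m => Measure.pi fun _ : Fin n => (volume : Measure ℝ)

open Classical in
/-- Tie-averaged, centered and normalized rank transform of the point `x` within the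
dataset `X`. -/
def rankVec (p : ℕ) (X : Multiset (Fin p → ℝ)) (x : Fin p → ℝ) : Fin p → ℝ := fun j =>
  2 / ((Multiset.card X : ℝ) - 1) *
    ((((X.filter fun y => y j < x j).card : ℝ) +
        (((X.filter fun y => y j = x j).card : ℝ) + 1) / 2) -
      ((Multiset.card X : ℝ) + 1) / 2)

/-- The rank covariance matrix `Σ_rk(X)`. -/
def rankCov (p : ℕ) (X : Multiset (Fin p → ℝ)) : Matrix (Fin p) (Fin p) ℝ :=
  sampleCov p (X.map (rankVec p X))

/-- Assumption (DATA-RANK). -/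
def AssumptionDATARank (k : ℕ) (θ : ℝ) (γ : ℕ → ℝ) (μ : Measure ℝ)
    (X : ∀ p, Multiset (Fin p → ℝ)) (l : ∀ p, Fin p → ℝ)
    (U : ∀ p, Matrix (Fin p) (Fin p) ℝ) : Prop :=
  0 < θ ∧
  Tendsto (fun p : ℕ => (Multiset.card (X p) : ℝ) / (p : ℝ) ^ ((3 : ℝ) / 2)) atTop
    (nhds θ) ∧
  AssumptionMAT k γ μ (fun p => rankCov p (X p)) l U

end

section AuxTV

open MeasureTheory Set

variable {Ω : Type*} [MeasurableSpace Ω]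

lemma tv_bddAbove (μ ν : Measure Ω) [IsProbabilityMeasure μ] [IsProbabilityMeasure ν] :
    BddAbove {r : ℝ | ∃ A : Set Ω, MeasurableSet A ∧ r = |(μ A).toReal - (ν A).toReal|} := by
  refine ⟨1, fun r hr => ?_⟩
  obtain ⟨A, hA, rfl⟩ := hr
  have h1 : (μ A).toReal ≤ 1 := by
    have := ENNReal.toReal_mono (by simp) (prob_le_one (μ := μ) (s := A))
    simpa using this
  have h2 : (ν A).toReal ≤ 1 := by
    have := ENNReal.toReal_mono (by simp) (prob_le_one (μ := ν) (s := A))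
    simpa using this
  have h3 : 0 ≤ (μ A).toReal := ENNReal.toReal_nonneg
  have h4 : 0 ≤ (ν A).toReal := ENNReal.toReal_nonneg
  rw [abs_sub_le_iff]
  constructor <;> linarith

lemma abs_measure_sub_le_tv (μ ν : Measure Ω) [IsProbabilityMeasure μ] [IsProbabilityMeasure ν]
    {A : Set Ω} (hA : MeasurableSet A) :
    |(μ A).toReal - (ν A).toReal| ≤ tvDist μ ν :=
  le_csSup (tv_bddAbove μ ν) ⟨A, hA, rfl⟩

lemma tvDist_comm' (μ ν : Measure Ω) : tvDist μ ν = tvDist ν μ := by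
  unfold tvDist
  congr 1
  ext r
  constructor <;> rintro ⟨A, hA, rfl⟩ <;> exact ⟨A, hA, (abs_sub_comm _ _)⟩

lemma abs_integral_sub_le_tv (μ ν : Measure Ω) [IsProbabilityMeasure μ] [IsProbabilityMeasure ν]
    {φ : Ω → ℝ} (hφ : Measurable φ) (hφ01 : ∀ x, φ x ∈ Set.Icc (0 : ℝ) 1) :
    |∫ x, φ x ∂μ - ∫ x, φ x ∂ν| ≤ tvDist μ ν := by
  set g : Measure Ω → ℝ → ℝ := fun κ t => (κ {x | t < φ x}).toReal with hg
  have hint : ∀ (κ : Measure Ω), IsProbabilityMeasure κ → Integrable φ κ := by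
    intro κ hκ
    refine (integrable_const (1 : ℝ)).mono' hφ.aestronglyMeasurable ?_
    refine Filter.Eventually.of_forall fun x => ?_
    rw [Real.norm_eq_abs, abs_le]
    exact ⟨by linarith [(hφ01 x).1], by simpa using (hφ01 x).2⟩
  have hgmeas : ∀ κ : Measure Ω, Measurable (g κ) := by
    intro κ
    have hanti : Antitone fun t => κ {x | t < φ x} := fun s t hst =>
      measure_mono fun x hx => lt_of_le_of_lt hst hx
    exact hanti.measurable.ennreal_toReal
  have hgzero : ∀ (κ : Measure Ω), ∀ t ∈ Set.Ioi (1 : ℝ), g κ t = 0 := by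
    intro κ t ht
    have : {x | t < φ x} = (∅ : Set Ω) := by
      ext x
      simp only [Set.mem_setOf_eq, Set.mem_empty_iff_false, iff_false, not_lt]
      exact le_trans (hφ01 x).2 ht.le
    simp [hg, this]
  have hgone : ∀ (κ : Measure Ω), IsProbabilityMeasure κ → ∀ t : ℝ, ‖g κ t‖ ≤ 1 := by
    intro κ hκ t
    rw [Real.norm_eq_abs, abs_of_nonneg ENNReal.toReal_nonneg]
    have := ENNReal.toReal_mono (by simp) (prob_le_one (μ := κ) (s := {x | t < φ x}))
    simpa using this
  have hIoc : ∀ (κ : Measure Ω), IsProbabilityMeasure κ → IntegrableOn (g κ) (Set.Ioc 0 1) := by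
    intro κ hκ
    exact Integrable.mono' (integrableOn_const (by simp [Real.volume_Ioc]))
      ((hgmeas κ).aestronglyMeasurable.restrict)
      (Filter.Eventually.of_forall fun t => hgone κ hκ t)
  have hIoi1 : ∀ (κ : Measure Ω), IntegrableOn (g κ) (Set.Ioi 1) := by
    intro κ
    exact integrableOn_zero.congr_fun
      (fun t ht => (hgzero κ t ht).symm) measurableSet_Ioi
  have hsplit : ∀ (κ : Measure Ω), IsProbabilityMeasure κ →
      ∫ x, φ x ∂κ = ∫ t in Set.Ioc 0 1, g κ t := by
    intro κ hκ
    have hlayer := (hint κ hκ).integral_eq_integral_meas_lt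
      (Filter.Eventually.of_forall fun x => (hφ01 x).1)
    have hunion : Set.Ioc (0 : ℝ) 1 ∪ Set.Ioi 1 = Set.Ioi 0 := Set.Ioc_union_Ioi_eq_Ioi zero_le_one
    have hdisj : Disjoint (Set.Ioc (0 : ℝ) 1) (Set.Ioi 1) := Set.Ioc_disjoint_Ioi le_rfl
    rw [hlayer]
    show ∫ t in Set.Ioi (0 : ℝ), g κ t = _
    rw [← hunion, setIntegral_union hdisj measurableSet_Ioi (hIoc κ hκ) (hIoi1 κ),
      setIntegral_eq_zero_of_forall_eq_zero (hgzero κ), add_zero]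
  rw [hsplit μ ‹_›, hsplit ν ‹_›, ← integral_sub (hIoc μ ‹_›) (hIoc ν ‹_›)]
  have hb := norm_setIntegral_le_of_norm_le_const (μ := volume) (s := Set.Ioc (0 : ℝ) 1)
    (C := tvDist μ ν) (f := fun t => g μ t - g ν t) (by simp [Real.volume_Ioc])
    (fun t _ => by
      rw [Real.norm_eq_abs]
      exact abs_measure_sub_le_tv μ ν (hφ (measurableSet_Ioi (a := t))))
  simpa [Real.volume_real_Ioc_of_le zero_le_one] using hb

lemma tradeoff_le_add_tv (ν ν₁ ν₂ : Measure Ω) [IsProbabilityMeasure ν]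
    [IsProbabilityMeasure ν₁] [IsProbabilityMeasure ν₂] {α : ℝ} (hα : 0 ≤ α) :
    tradeoff ν ν₁ α ≤ tradeoff ν ν₂ α + tvDist ν₁ ν₂ := by
  set S : Measure Ω → Set ℝ := fun κ =>
    {r : ℝ | ∃ φ : Ω → ℝ, Measurable φ ∧ (∀ x, φ x ∈ Set.Icc (0 : ℝ) 1) ∧
      (∫ x, φ x ∂ν) ≤ α ∧ r = 1 - ∫ x, φ x ∂κ} with hS
  have hle1 : ∀ (κ : Measure Ω), IsProbabilityMeasure κ → ∀ φ : Ω → ℝ, Measurable φ →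
      (∀ x, φ x ∈ Set.Icc (0 : ℝ) 1) → ∫ x, φ x ∂κ ≤ 1 := by
    intro κ hκ φ hφ hφ01
    have : Integrable φ κ := by
      refine (integrable_const (1 : ℝ)).mono' hφ.aestronglyMeasurable ?_
      refine Filter.Eventually.of_forall fun x => ?_
      rw [Real.norm_eq_abs, abs_le]
      exact ⟨by linarith [(hφ01 x).1], by simpa using (hφ01 x).2⟩
    calc ∫ x, φ x ∂κ ≤ ∫ _, (1 : ℝ) ∂κ :=
          integral_mono this (integrable_const 1) fun x => (hφ01 x).2
      _ = 1 := by simp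
  have hbdd : BddBelow (S ν₁) := by
    refine ⟨0, fun r hr => ?_⟩
    obtain ⟨φ, hφ, hφ01, _, rfl⟩ := hr
    linarith [hle1 ν₁ ‹_› φ hφ hφ01]
  have hne : (S ν₂).Nonempty :=
    ⟨1, fun _ => 0, measurable_const, fun x => ⟨le_refl 0, zero_le_one⟩, by simpa using hα,
      by simp⟩
  have key : ∀ r ∈ S ν₂, tradeoff ν ν₁ α - tvDist ν₁ ν₂ ≤ r := by
    rintro r ⟨φ, hφ, hφ01, hφα, rfl⟩
    have h1 : tradeoff ν ν₁ α ≤ 1 - ∫ x, φ x ∂ν₁ :=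
      csInf_le hbdd ⟨φ, hφ, hφ01, hφα, rfl⟩
    have h2 := abs_integral_sub_le_tv ν₁ ν₂ hφ hφ01
    rw [abs_sub_le_iff] at h2
    linarith [h2.2]
  have := le_csInf hne key
  have heq : tradeoff ν ν₂ α = sInf (S ν₂) := rfl
  rw [heq]
  linarith

end AuxTV

/-- For probability measures `ν, ν̃, ν̄` on a common measurable space and
every `α ∈ [0,1]`, `|T(ν, ν̃)(α) - T(ν, ν̄)(α)| ≤ TV(ν̃, ν̄)`. -/
theorem statement16
    {Ω : Type*} [MeasurableSpace Ω] (ν νt νb : Measure Ω)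
    (hν : IsProbabilityMeasure ν) (hνt : IsProbabilityMeasure νt)
    (hνb : IsProbabilityMeasure νb) :
    ∀ α ∈ Set.Icc (0 : ℝ) 1,
      |tradeoff ν νt α - tradeoff ν νb α| ≤ tvDist νt νb := by
  intro α hα
  rw [abs_sub_le_iff]
  constructor
  · linarith [tradeoff_le_add_tv ν νt νb hα.1]
  · have := tradeoff_le_add_tv ν νb νt hα.1
    rw [tvDist_comm' νb νt] at this
    linarith
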